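/- Let S1 : D1 → ℤ_{≥0} be a horizontal grading on the maximal Dyck path D_{a1,a2}. Then the shadow sh(S1) and remote shadow rsh(S1) satisfy: (i) a vertical grading S2 : D2 → ℤ_{≥0} is compatible with S1 if and only if S2(v) = 0 for all v ∈ sh(S1) ∖ rsh(S1) and for each h ∈ supp(S1) and each v ∈ rsh(S1) at least one of the conditions (HGC), (VGC) is satisfied; and (ii) |sh(S1)| = min(a2, |S1|). Symmetrically, for a vertical grading S2 the sets rsh(S2) ⊆ sh(S2) ⊆ D1 satisfy the analogous characterization of C(S2) and |sh(S2)| = min(a1, |S2|). -/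

import Mathlib

open scoped Classical
noncomputable section

namespace Dyck

/-- The edges of the maximal Dyck path `D_{a,b}`: `a` horizontal edges
`h_1, …, h_a` (0-indexed here) and `b` vertical edges `v_1, …, v_b`. -/
abbrev Edge (a b : ℕ) := Fin a ⊕ Fin b

/-- The height of the horizontal edge `h_{j+1}` of `D_{a,b}` is `⌊j·b/a⌋`. -/
def ht (a b : ℕ) (j : Fin a) : ℕ := j.1 * b / a

/-- The depth of the vertical edge `v_{j+1}` of `D_{a,b}` is `⌈(j+1)·a/b⌉`. -/
def dep (a b : ℕ) (j : Fin b) : ℕ := ((j.1 + 1) * a + b - 1) / b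

/-- The position (0-indexed) of an edge along the maximal Dyck path `D_{a,b}`:
a horizontal edge `h_{j+1}` is preceded by `j` horizontal edges and by `ht j`
vertical edges; a vertical edge `v_{j+1}` is preceded by `j` vertical edges and
by `dep j` horizontal edges. -/
def pos (a b : ℕ) : Edge a b → ℕ
  | Sum.inl j => j.1 + ht a b j
  | Sum.inr j => j.1 + dep a b j

/-- Cyclic distance from `e` to `f` along the closed loop `D_{a,b}`
(the endpoints `(0,0)` and `(a,b)` are identified). -/
def dd (a b : ℕ) (e f : Edge a b) : ℕ := (pos a b f + (a + b) - pos a b e) % (a + b)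

/-- The (cyclic) subpath of `D_{a,b}` from `e` to `f`, both included. -/
def subpath (a b : ℕ) (e f : Edge a b) : Finset (Edge a b) :=
  Finset.univ.filter fun g => dd a b e g ≤ dd a b e f

/-- The number of horizontal edges in a set of edges. -/
def hcount (a b : ℕ) (s : Finset (Edge a b)) : ℕ := (s.filter fun e => e.isLeft = true).card

/-- The number of vertical edges in a set of edges. -/
def vcount (a b : ℕ) (s : Finset (Edge a b)) : ℕ := (s.filter fun e => e.isRight = true).card

/-- The sum of a horizontal grading over the horizontal edges of a set of edges. -/
def hsum (a b : ℕ) (S1 : Fin a → ℕ) (s : Finset (Edge a b)) : ℕ :=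
  ∑ e ∈ s, Sum.elim S1 (fun _ => 0) e

/-- The sum of a vertical grading over the vertical edges of a set of edges. -/
def vsum (a b : ℕ) (S2 : Fin b → ℕ) (s : Finset (Edge a b)) : ℕ :=
  ∑ e ∈ s, Sum.elim (fun _ => 0) S2 e

/-- The horizontal shadow statistic `f_{S1}` of a set of edges. -/
def fH (a b : ℕ) (S1 : Fin a → ℕ) (s : Finset (Edge a b)) : ℤ :=
  (hsum a b S1 s : ℤ) - (vcount a b s : ℤ)

/-- The vertical shadow statistic `f_{S2}` of a set of edges. -/
def fV (a b : ℕ) (S2 : Fin b → ℕ) (s : Finset (Edge a b)) : ℤ :=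
  (vsum a b S2 s : ℤ) - (hcount a b s : ℤ)

/-- Horizontal grading condition (HGC) for the pair `(h, v)`: there is an edge `e`
with `he` a proper subpath of `hv` and `|(he)_2| = Σ_{h' ∈ (he)_1} S1(h')`. -/
def HGC (a b : ℕ) (S1 : Fin a → ℕ) (h : Fin a) (v : Fin b) : Prop :=
  ∃ e : Edge a b, dd a b (.inl h) e < dd a b (.inl h) (.inr v) ∧
    vcount a b (subpath a b (.inl h) e) = hsum a b S1 (subpath a b (.inl h) e)

/-- Vertical grading condition (VGC) for the pair `(h, v)`: there is an edge `e`
with `ev` a proper subpath of `hv` and `|(ev)_1| = Σ_{v' ∈ (ev)_2} S2(v')`. -/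
def VGC (a b : ℕ) (S2 : Fin b → ℕ) (h : Fin a) (v : Fin b) : Prop :=
  ∃ e : Edge a b, 0 < dd a b (.inl h) e ∧ dd a b (.inl h) e ≤ dd a b (.inl h) (.inr v) ∧
    hcount a b (subpath a b e (.inr v)) = vsum a b S2 (subpath a b e (.inr v))

/-- A pair of gradings `(S1, S2)` on `D_{a,b}` is compatible. -/
def Compatible (a b : ℕ) (S1 : Fin a → ℕ) (S2 : Fin b → ℕ) : Prop :=
  ∀ (h : Fin a) (v : Fin b), HGC a b S1 h v ∨ VGC a b S2 h v

/-- `e` is a "balanced" endpoint for the horizontal edge `h`: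
`|(he)_2| = Σ_{h' ∈ (he)_1} S1(h')`. -/
def balH (a b : ℕ) (S1 : Fin a → ℕ) (h : Fin a) (e : Edge a b) : Prop :=
  vcount a b (subpath a b (.inl h) e) = hsum a b S1 (subpath a b (.inl h) e)

/-- The local shadow `sh(h; S1)`: the vertical edges of the shortest balanced
subpath starting at `h` (all of `D2` if there is none). -/
def shH (a b : ℕ) (S1 : Fin a → ℕ) (h : Fin a) : Finset (Fin b) :=
  Finset.univ.filter fun v =>
    ∀ e : Edge a b, balH a b S1 h e → dd a b (.inl h) (.inr v) ≤ dd a b (.inl h) e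

/-- The shadow `sh(S1) = ⋃_h sh(h; S1)`. -/
def shadowH (a b : ℕ) (S1 : Fin a → ℕ) : Finset (Fin b) :=
  Finset.univ.filter fun v => ∃ h : Fin a, v ∈ shH a b S1 h

/-- The vertical edges removed from `sh(S1)` to form the remote shadow: for each
`d ∈ [1,a]`, the (up to) `S1(h_d)` vertical edges of depth `d` immediately
following `h_d`. -/
def removedH (a b : ℕ) (S1 : Fin a → ℕ) : Finset (Fin b) :=
  Finset.univ.filter fun v => ∃ hd : Fin a, hd.1 + 1 = dep a b v ∧
    (Finset.univ.filter fun v' : Fin b => dep a b v' = dep a b v ∧ v'.1 < v.1).card < S1 hd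

/-- The remote shadow `rsh(S1)`. -/
def rshH (a b : ℕ) (S1 : Fin a → ℕ) : Finset (Fin b) :=
  shadowH a b S1 \ removedH a b S1

/-- `e` is a "balanced" starting point for the vertical edge `v`:
`|(ev)_1| = Σ_{v' ∈ (ev)_2} S2(v')`. -/
def balV (a b : ℕ) (S2 : Fin b → ℕ) (e : Edge a b) (v : Fin b) : Prop :=
  hcount a b (subpath a b e (.inr v)) = vsum a b S2 (subpath a b e (.inr v))

/-- The local shadow `sh(v; S2)`: the horizontal edges of the shortest balanced
subpath ending at `v` (all of `D1` if there is none). -/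
def shV (a b : ℕ) (S2 : Fin b → ℕ) (v : Fin b) : Finset (Fin a) :=
  Finset.univ.filter fun h =>
    ∀ e : Edge a b, balV a b S2 e v → dd a b (.inl h) (.inr v) ≤ dd a b e (.inr v)

/-- The shadow `sh(S2) = ⋃_v sh(v; S2)`. -/
def shadowV (a b : ℕ) (S2 : Fin b → ℕ) : Finset (Fin a) :=
  Finset.univ.filter fun h => ∃ v : Fin b, h ∈ shV a b S2 v

/-- The horizontal edges removed from `sh(S2)` to form the remote shadow: for each
`ℓ ∈ [1,b]`, the (up to) `S2(v_ℓ)` horizontal edges of height `ℓ−1` immediately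
preceding `v_ℓ`. -/
def removedV (a b : ℕ) (S2 : Fin b → ℕ) : Finset (Fin a) :=
  Finset.univ.filter fun h => ∃ vl : Fin b, vl.1 = ht a b h ∧
    (Finset.univ.filter fun h' : Fin a => ht a b h' = ht a b h ∧ h.1 < h'.1).card < S2 vl

/-- The remote shadow `rsh(S2)`. -/
def rshV (a b : ℕ) (S2 : Fin b → ℕ) : Finset (Fin a) :=
  shadowV a b S2 \ removedV a b S2

/-- The support of a grading. -/
def suppH (a : ℕ) (S1 : Fin a → ℕ) : Finset (Fin a) := Finset.univ.filter fun h => S1 h ≠ 0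
def suppV (b : ℕ) (S2 : Fin b → ℕ) : Finset (Fin b) := Finset.univ.filter fun v => S2 v ≠ 0

/-! ### Infrastructure: positions, cyclic distance, subpaths -/

section Infra

variable {a b : ℕ}

lemma ht_mono (a b : ℕ) {i j : Fin a} (h : i.1 ≤ j.1) : ht a b i ≤ ht a b j :=
  Nat.div_le_div_right (Nat.mul_le_mul_right _ h)

lemma dep_mono (a b : ℕ) {i j : Fin b} (h : i.1 ≤ j.1) : dep a b i ≤ dep a b j :=
  Nat.div_le_div_right (by have := Nat.mul_le_mul_right a (Nat.add_le_add_right h 1); omega)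

lemma ht_le (a b : ℕ) (j : Fin a) : ht a b j ≤ b := by
  have ha : 0 < a := j.pos
  have h1 : j.1 * b ≤ a * b := Nat.mul_le_mul_right _ (le_of_lt j.2)
  have h2 : j.1 * b / a ≤ a * b / a := Nat.div_le_div_right h1
  rwa [Nat.mul_div_cancel_left _ ha] at h2

lemma ht_lt (a : ℕ) {b : ℕ} (hb : 0 < b) (j : Fin a) : ht a b j < b := by
  have ha : 0 < a := j.pos
  exact Nat.div_lt_of_lt_mul ((Nat.mul_lt_mul_right hb).2 j.2)

lemma dep_le (a b : ℕ) (i : Fin b) : dep a b i ≤ a := by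
  have hb : 0 < b := i.pos
  have h1 : (i.1 + 1) * a ≤ b * a := Nat.mul_le_mul_right _ i.2
  have h3 : ((i.1 + 1) * a + b - 1) < (a + 1) * b := by
    have h4 : (a+1) * b = b * a + b := by ring
    omega
  have h5 := (Nat.div_lt_iff_lt_mul hb).2 h3
  show ((i.1 + 1) * a + b - 1) / b ≤ a
  omega

lemma dep_pos (a : ℕ) {b : ℕ} (ha : 0 < a) (i : Fin b) : 0 < dep a b i := by
  have hb : 0 < b := i.pos
  have h1 : b ≤ (i.1 + 1) * a + b - 1 := by
    have : 0 < (i.1+1) * a := Nat.mul_pos (by omega) ha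
    omega
  exact Nat.div_pos h1 hb

/-- Trichotomy between horizontal and vertical edges. -/
lemma tri (j : Fin a) (i : Fin b) : ht a b j ≤ i.1 ↔ ¬ (dep a b i ≤ j.1) := by
  have ha : 0 < a := j.pos
  have hb : 0 < b := i.pos
  have h1 : ht a b j ≤ i.1 ↔ j.1 * b < (i.1 + 1) * a := by
    unfold ht
    rw [← Nat.lt_succ_iff, Nat.div_lt_iff_lt_mul ha, Nat.succ_eq_add_one, mul_comm]
  have h2 : dep a b i ≤ j.1 ↔ (i.1 + 1) * a ≤ j.1 * b := by
    unfold dep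
    rw [← Nat.lt_succ_iff, Nat.div_lt_iff_lt_mul hb, Nat.succ_eq_add_one]
    constructor
    · intro h
      have : (j.1 + 1) * b = j.1 * b + b := by ring
      omega
    · intro h
      have : (j.1 + 1) * b = j.1 * b + b := by ring
      omega
  omega

lemma pos_lt (e : Edge a b) : pos a b e < a + b := by
  cases e with
  | inl j => have := ht_le a b j; have := j.2; simp only [pos]; omega
  | inr i => have := dep_le a b i; have := i.2; simp only [pos]; omega

lemma pos_injective : Function.Injective (pos a b) := by
  intro e f h
  cases e with
  | inl j =>
    cases f with
    | inl j' =>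
      simp only [pos] at h
      rcases lt_trichotomy j.1 j'.1 with hlt | heq | hlt
      · have := ht_mono a b (le_of_lt hlt); omega
      · exact congrArg Sum.inl (Fin.ext heq)
      · have := ht_mono a b (le_of_lt hlt); omega
    | inr i =>
      exfalso
      simp only [pos] at h
      rcases le_or_gt (ht a b j) i.1 with hle | hlt
      · have := (tri j i).1 hle; omega
      · have : dep a b i ≤ j.1 := by by_contra hc; exact absurd ((tri j i).2 hc) (by omega)
        omega
  | inr i =>
    cases f with
    | inl j =>
      exfalso
      simp only [pos] at h
      rcases le_or_gt (ht a b j) i.1 with hle | hlt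
      · have := (tri j i).1 hle; omega
      · have : dep a b i ≤ j.1 := by by_contra hc; exact absurd ((tri j i).2 hc) (by omega)
        omega
    | inr i' =>
      simp only [pos] at h
      rcases lt_trichotomy i.1 i'.1 with hlt | heq | hlt
      · have := dep_mono a b (le_of_lt hlt); omega
      · exact congrArg Sum.inr (Fin.ext heq)
      · have := dep_mono a b (le_of_lt hlt); omega

/-- `pos` as an equivalence onto `Fin (a+b)`. -/
noncomputable def posEquiv (a b : ℕ) : Edge a b ≃ Fin (a + b) :=
  Equiv.ofBijective (fun e => ⟨pos a b e, pos_lt e⟩)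
    (by
      rw [Fintype.bijective_iff_injective_and_card]
      refine ⟨fun e f h => pos_injective (by simpa [Fin.mk.injEq] using h), by simp⟩)

/-- The edge at (cyclic) position `p`. -/
noncomputable def edgeAt (a b : ℕ) (hn : 0 < a + b) (p : ℕ) : Edge a b :=
  (posEquiv a b).symm ⟨p % (a + b), Nat.mod_lt _ hn⟩

lemma pos_edgeAt (hn : 0 < a + b) (p : ℕ) : pos a b (edgeAt a b hn p) = p % (a + b) := by
  have := (posEquiv a b).apply_symm_apply ⟨p % (a + b), Nat.mod_lt _ hn⟩
  exact congrArg Fin.val this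

lemma edgeAt_pos (hn : 0 < a + b) (e : Edge a b) : edgeAt a b hn (pos a b e) = e := by
  apply pos_injective
  rw [pos_edgeAt, Nat.mod_eq_of_lt (pos_lt e)]

lemma edgeAt_period (hn : 0 < a + b) (p : ℕ) : edgeAt a b hn (p + (a + b)) = edgeAt a b hn p := by
  unfold edgeAt
  congr 1
  exact Fin.ext (Nat.add_mod_right p (a + b))

lemma dd_lt (hn : 0 < a + b) (e f : Edge a b) : dd a b e f < a + b := Nat.mod_lt _ hn

lemma dd_self (e : Edge a b) : dd a b e e = 0 := by
  unfold dd
  have h : pos a b e + (a + b) - pos a b e = a + b := by omega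
  rw [h, Nat.mod_self]

lemma dd_eq_zero_iff (hn : 0 < a + b) {e f : Edge a b} : dd a b e f = 0 ↔ e = f := by
  constructor
  · intro h
    unfold dd at h
    have h1 := pos_lt e
    have h2 := pos_lt f
    obtain ⟨k, hk⟩ := Nat.dvd_of_mod_eq_zero h
    rcases k with _ | _ | k
    · omega
    · apply pos_injective; omega
    · exfalso
      have h3 : (a+b) * 2 ≤ (a+b) * (k+1+1) := Nat.mul_le_mul_left _ (by omega)
      omega
  · rintro rfl; exact dd_self e

lemma ddRel (hn : 0 < a + b) (e f : Edge a b) :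
    (pos a b e + dd a b e f) % (a + b) = pos a b f := by
  set n := a + b
  set x := pos a b e with hx
  set y := pos a b f with hy
  have hxn : x < n := pos_lt e
  have hyn : y < n := pos_lt f
  show (x + (y + n - x) % n) % n = y
  rcases le_or_gt x y with h | h
  · have h1 : y + n - x = (y - x) + n := by omega
    rw [h1, Nat.add_mod_right, Nat.mod_eq_of_lt (by omega : y - x < n)]
    have : x + (y - x) = y := by omega
    rw [this, Nat.mod_eq_of_lt hyn]
  · have h1 : y + n - x < n := by omega
    rw [Nat.mod_eq_of_lt h1]
    have : x + (y + n - x) = y + n := by omega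
    rw [this, Nat.add_mod_right, Nat.mod_eq_of_lt hyn]

lemma dd_unique (hn : 0 < a + b) {e f : Edge a b} {m : ℕ} (hm : m < a + b)
    (h : (pos a b e + m) % (a + b) = pos a b f) : dd a b e f = m := by
  set n := a + b
  set x := pos a b e with hx
  have hxn : x < n := pos_lt e
  unfold dd
  rw [← h]
  show ((x + m) % n + n - x) % n = m
  rcases le_or_gt (x + m) n with h1 | h1
  · rcases eq_or_lt_of_le h1 with h2 | h2
    · have h3 : (x + m) % n = 0 := by rw [h2, Nat.mod_self]
      rw [h3]
      have h4 : 0 + n - x = m := by omega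
      rw [h4, Nat.mod_eq_of_lt hm]
    · rw [Nat.mod_eq_of_lt h2]
      have : x + m + n - x = m + n := by omega
      rw [this, Nat.add_mod_right, Nat.mod_eq_of_lt hm]
  · have h2 : (x + m) % n = x + m - n := by
      rw [Nat.mod_eq_sub_mod (by omega), Nat.mod_eq_of_lt (by omega)]
    rw [h2]
    have : x + m - n + n - x = m := by omega
    rw [this, Nat.mod_eq_of_lt hm]

lemma dd_add (hn : 0 < a + b) {e f g : Edge a b} (h : dd a b e f + dd a b f g < a + b) :
    dd a b e g = dd a b e f + dd a b f g := by
  apply dd_unique hn h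
  have h1 := ddRel hn e f
  have h2 := ddRel hn f g
  calc (pos a b e + (dd a b e f + dd a b f g)) % (a+b)
      = ((pos a b e + dd a b e f) % (a+b) + dd a b f g) % (a+b) := by
        rw [Nat.mod_add_mod, add_assoc]
    _ = pos a b g := by rw [h1, h2]

lemma dd_sub (hn : 0 < a + b) {e f g : Edge a b} (h : dd a b e f ≤ dd a b e g) :
    dd a b f g = dd a b e g - dd a b e f := by
  apply dd_unique hn (by have := dd_lt hn e g; omega)
  have h1 := ddRel hn e f
  have h2 := ddRel hn e g
  calc (pos a b f + (dd a b e g - dd a b e f)) % (a+b)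
      = ((pos a b e + dd a b e f) % (a+b) + (dd a b e g - dd a b e f)) % (a+b) := by rw [h1]
    _ = (pos a b e + dd a b e f + (dd a b e g - dd a b e f)) % (a+b) := by
        rw [Nat.mod_add_mod]
    _ = (pos a b e + dd a b e g) % (a+b) := by congr 1; omega
    _ = pos a b g := h2

lemma dd_sub' (hn : 0 < a + b) {e f g : Edge a b} (h : dd a b f g ≤ dd a b e g) :
    dd a b e f = dd a b e g - dd a b f g := by
  apply dd_unique hn (by have := dd_lt hn e g; omega)
  have h1 := ddRel hn f g
  have h2 := ddRel hn e g
  have key : (pos a b e + (dd a b e g - dd a b f g) + dd a b f g) % (a+b)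
      = (pos a b f + dd a b f g) % (a+b) := by
    rw [h1]
    have : pos a b e + (dd a b e g - dd a b f g) + dd a b f g = pos a b e + dd a b e g := by omega
    rw [this, h2]
  have := (Nat.ModEq.add_right_cancel' (dd a b f g) key)
  unfold Nat.ModEq at this
  rw [this, Nat.mod_eq_of_lt (pos_lt f)]

lemma mem_subpath {e f g : Edge a b} : g ∈ subpath a b e f ↔ dd a b e g ≤ dd a b e f := by
  simp [subpath]

lemma subpath_self (hn : 0 < a + b) (e : Edge a b) : subpath a b e e = {e} := by
  ext g
  simp only [mem_subpath, dd_self, Nat.le_zero, Finset.mem_singleton]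
  rw [dd_eq_zero_iff hn]
  exact ⟨fun h => h.symm, fun h => h.symm⟩

lemma dd_edgeAt (hn : 0 < a + b) (e : Edge a b) {m : ℕ} (hm : m < a + b) :
    dd a b e (edgeAt a b hn (pos a b e + m)) = m :=
  dd_unique hn hm (pos_edgeAt hn _).symm

lemma edgeAt_dd (hn : 0 < a + b) (e f : Edge a b) :
    edgeAt a b hn (pos a b e + dd a b e f) = f := by
  apply pos_injective
  rw [pos_edgeAt, ddRel hn]

lemma subpath_eq_image (hn : 0 < a + b) (e f : Edge a b) :
    subpath a b e f =
      (Finset.range (dd a b e f + 1)).image (fun m => edgeAt a b hn (pos a b e + m)) := by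
  ext g
  simp only [mem_subpath, Finset.mem_image, Finset.mem_range, Nat.lt_succ_iff]
  constructor
  · intro h
    exact ⟨dd a b e g, h, edgeAt_dd hn e g⟩
  · rintro ⟨m, hm, rfl⟩
    rw [dd_edgeAt hn e (lt_of_le_of_lt hm (dd_lt hn e f))]
    exact hm

lemma edgeAt_injOn (hn : 0 < a + b) (e : Edge a b) {m₁ m₂ : ℕ} (h1 : m₁ < a + b)
    (h2 : m₂ < a + b) (h : edgeAt a b hn (pos a b e + m₁) = edgeAt a b hn (pos a b e + m₂)) :
    m₁ = m₂ := by
  have := dd_edgeAt hn e h1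
  rw [h, dd_edgeAt hn e h2] at this
  omega

lemma card_subpath_le (hn : 0 < a + b) (e f : Edge a b) :
    (subpath a b e f).card ≤ dd a b e f + 1 := by
  rw [subpath_eq_image hn]
  exact le_trans (Finset.card_image_le) (by simp)

lemma dd_flip (hn : 0 < a + b) {x y z : Edge a b} :
    dd a b y z < dd a b x z ↔ 0 < dd a b x y ∧ dd a b x y ≤ dd a b x z := by
  constructor
  · intro h
    have h1 : dd a b x y = dd a b x z - dd a b y z := dd_sub' hn (le_of_lt h)
    omega
  · rintro ⟨h0, hle⟩
    have h1 : dd a b y z = dd a b x z - dd a b x y := dd_sub hn hle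
    omega

lemma dd_flip' (hn : 0 < a + b) {x y z : Edge a b} :
    dd a b x y < dd a b x z ↔ 0 < dd a b y z ∧ dd a b y z ≤ dd a b x z := by
  constructor
  · intro h
    have h1 : dd a b y z = dd a b x z - dd a b x y := dd_sub hn (le_of_lt h)
    omega
  · rintro ⟨h0, hle⟩
    have h1 : dd a b x y = dd a b x z - dd a b y z := dd_sub' hn hle
    omega

lemma dd_mem_iff (hn : 0 < a + b) {e f g : Edge a b} :
    dd a b e g ≤ dd a b e f ↔ dd a b g f ≤ dd a b e f := by
  constructor
  · intro h; have := dd_sub hn h; omega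
  · intro h; have := dd_sub' hn h; omega

end Infra

/-! ### Part (i): shadows control compatibility (horizontal side) -/

section PartOne

lemma HGC_of_S1_zero {a b : ℕ} {S1 : Fin a → ℕ} (hn : 0 < a + b) (h : Fin a) (v : Fin b)
    (hz : S1 h = 0) : HGC a b S1 h v := by
  refine ⟨.inl h, ?_, ?_⟩
  · rw [dd_self]
    have : dd a b (.inl h) (.inr v) ≠ 0 := fun hc => by simpa using (dd_eq_zero_iff hn).1 hc
    omega
  · rw [subpath_self hn]
    simp [vcount, hsum, Finset.filter_singleton, hz]

lemma VGC_of_S2_zero {a b : ℕ} {S2 : Fin b → ℕ} (hn : 0 < a + b) (h : Fin a) (v : Fin b)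
    (hz : S2 v = 0) : VGC a b S2 h v := by
  refine ⟨.inr v, ?_, le_refl _, ?_⟩
  · have : dd a b (.inl h) (.inr v) ≠ 0 := fun hc => by simpa using (dd_eq_zero_iff hn).1 hc
    omega
  · rw [subpath_self hn]
    simp [hcount, vsum, Finset.filter_singleton, hz]

lemma removed_S2_zero {a b : ℕ} {S1 : Fin a → ℕ} {S2 : Fin b → ℕ}
    (hC : Compatible a b S1 S2) {v : Fin b} (hv : v ∈ removedH a b S1) : S2 v = 0 := by
  rw [removedH, Finset.mem_filter] at hv
  obtain ⟨-, hd, hdep, hcard⟩ := hv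
  have ha : 0 < a := hd.pos
  have hb : 0 < b := v.pos
  have hn : 0 < a + b := by omega
  have hB : ht a b hd ≤ v.1 := (tri hd v).2 (by omega)
  have hA : ∀ v' : Fin b, ht a b hd ≤ v'.1 → v'.1 ≤ v.1 → dep a b v' = hd.1 + 1 := by
    intro v' h1 h2
    have h3 := (tri hd v').1 h1
    have h4 : dep a b v' ≤ dep a b v := dep_mono a b h2
    omega
  set c := v.1 - ht a b hd with hc
  have hcc : (Finset.univ.filter
      fun v' : Fin b => dep a b v' = dep a b v ∧ v'.1 < v.1).card = c := by
    have heq : (Finset.univ.filter fun v' : Fin b => dep a b v' = dep a b v ∧ v'.1 < v.1)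
        = (Finset.univ.filter fun v' : Fin b => ht a b hd ≤ v'.1 ∧ v'.1 < v.1) := by
      ext v'
      simp only [Finset.mem_filter, Finset.mem_univ, true_and]
      constructor
      · rintro ⟨h1, h2⟩
        exact ⟨(tri hd v').2 (by omega), h2⟩
      · rintro ⟨h1, h2⟩
        exact ⟨(hA v' h1 h2.le).trans hdep, h2⟩
    rw [heq]
    rw [show c = (Finset.Ico (ht a b hd) v.1).card by rw [Nat.card_Ico]]
    apply Finset.card_nbij (i := Fin.val)
    · intro v' hv'
      simp only [Finset.mem_coe, Finset.mem_filter, Finset.mem_univ, true_and] at hv'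
      rw [Finset.mem_coe, Finset.mem_Ico]
      exact hv'
    · exact fun x _ y _ h => Fin.val_injective h
    · intro m hm
      simp only [Finset.coe_Ico, Set.mem_Ico] at hm
      refine ⟨⟨m, lt_trans hm.2 v.2⟩, ?_, rfl⟩
      simp only [Finset.coe_filter, Finset.mem_univ, true_and, Set.mem_setOf_eq]
      exact hm
  rw [hcc] at hcard
  have hposhd : pos a b (.inl hd) = hd.1 + ht a b hd := rfl
  have hposv : pos a b (.inr v) = v.1 + (hd.1 + 1) := by
    show v.1 + dep a b v = v.1 + (hd.1 + 1)
    omega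
  have hcb : c + 1 ≤ b := by omega
  have hposeq : pos a b (.inl hd) + (c + 1) = pos a b (.inr v) := by
    rw [hposhd, hposv]; omega
  have hD : dd a b (.inl hd) (.inr v) = c + 1 := by
    apply dd_unique hn (by omega)
    rw [hposeq, Nat.mod_eq_of_lt (pos_lt _)]
  have hE : ∀ g : Edge a b, 0 < dd a b (.inl hd) g → dd a b (.inl hd) g ≤ c + 1 →
      ∃ v'' : Fin b, g = .inr v'' := by
    intro g h1 h2
    set m := dd a b (.inl hd) g with hm
    have hv'' : ht a b hd + m - 1 < b := by omega
    refine ⟨⟨ht a b hd + m - 1, hv''⟩, ?_⟩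
    apply pos_injective
    have hdepv'' : dep a b ⟨ht a b hd + m - 1, hv''⟩ = hd.1 + 1 :=
      hA _ (by simp only; omega) (by simp only; omega)
    have hp : pos a b (Sum.inr (⟨ht a b hd + m - 1, hv''⟩ : Fin b)) = pos a b (.inl hd) + m := by
      show (ht a b hd + m - 1) + dep a b (⟨ht a b hd + m - 1, hv''⟩ : Fin b)
          = pos a b (.inl hd) + m
      rw [hdepv'', hposhd]
      omega
    have hrel := ddRel hn (.inl hd) g
    rw [← hm] at hrel
    have hlt : pos a b (.inl hd) + m < a + b := by
      have := pos_lt (Sum.inr v : Edge a b)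
      omega
    calc pos a b g = (pos a b (.inl hd) + m) % (a + b) := hrel.symm
      _ = pos a b (.inl hd) + m := Nat.mod_eq_of_lt hlt
      _ = pos a b (Sum.inr (⟨ht a b hd + m - 1, hv''⟩ : Fin b)) := hp.symm
  rcases hC hd v with hH | hV
  · exfalso
    obtain ⟨e, hlt, hbal⟩ := hH
    rw [hD] at hlt
    have hmem : (Sum.inl hd : Edge a b) ∈ subpath a b (.inl hd) e := by
      rw [mem_subpath, dd_self]; omega
    have h1 : S1 hd ≤ hsum a b S1 (subpath a b (.inl hd) e) := by
      have := Finset.single_le_sum (f := fun e' : Edge a b => Sum.elim S1 (fun _ => 0) e')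
        (fun i _ => Nat.zero_le _) hmem
      simpa [hsum] using this
    have h2 : vcount a b (subpath a b (.inl hd) e) ≤ dd a b (.inl hd) e := by
      have hsub : (subpath a b (.inl hd) e).filter (fun e' => e'.isRight = true)
          ⊆ (subpath a b (.inl hd) e).erase (.inl hd) := by
        intro g hg
        rw [Finset.mem_filter] at hg
        rw [Finset.mem_erase]
        refine ⟨?_, hg.1⟩
        rintro rfl
        simp at hg
      have h3 := Finset.card_le_card hsub
      have h4 : ((subpath a b (.inl hd) e).erase (.inl hd)).card
          = (subpath a b (.inl hd) e).card - 1 := Finset.card_erase_of_mem hmem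
      have h5 := card_subpath_le hn (.inl hd) e
      have h6 : 0 < (subpath a b (.inl hd) e).card := Finset.card_pos.2 ⟨_, hmem⟩
      unfold vcount
      omega
    omega
  · obtain ⟨e, h0, hle, hbal⟩ := hV
    rw [hD] at hle
    have hdev : dd a b e (.inr v) = (c + 1) - dd a b (.inl hd) e := by
      rw [← hD]
      exact dd_sub hn (by rw [hD]; exact hle)
    have hvert : ∀ g ∈ subpath a b e (.inr v), g.isLeft = false := by
      intro g hg
      rw [mem_subpath] at hg
      rw [hdev] at hg
      have hsum_lt : dd a b (.inl hd) e + dd a b e g < a + b := by omega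
      have hgd : dd a b (.inl hd) g = dd a b (.inl hd) e + dd a b e g := dd_add hn hsum_lt
      have h1 : 0 < dd a b (.inl hd) g := by omega
      have h2 : dd a b (.inl hd) g ≤ c + 1 := by omega
      obtain ⟨v'', rfl⟩ := hE g h1 h2
      rfl
    have hh0 : hcount a b (subpath a b e (.inr v)) = 0 := by
      unfold hcount
      rw [Finset.card_eq_zero, Finset.filter_eq_empty_iff]
      intro g hg
      simp [hvert g hg]
    have hmem : (Sum.inr v : Edge a b) ∈ subpath a b e (.inr v) := by
      rw [mem_subpath]
    have h1 : S2 v ≤ vsum a b S2 (subpath a b e (.inr v)) := by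
      have := Finset.single_le_sum (f := fun e' : Edge a b => Sum.elim (fun _ => 0) S2 e')
        (fun i _ => Nat.zero_le _) hmem
      simpa [vsum] using this
    omega

lemma part_one {a b : ℕ} (S1 : Fin a → ℕ) (S2 : Fin b → ℕ) :
    Compatible a b S1 S2 ↔
      ((∀ v ∈ shadowH a b S1, v ∉ rshH a b S1 → S2 v = 0) ∧
        ∀ h ∈ suppH a S1, ∀ v ∈ rshH a b S1, HGC a b S1 h v ∨ VGC a b S2 h v) := by
  constructor
  · intro hC
    refine ⟨?_, fun h _ v _ => hC h v⟩
    intro v hsh hnr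
    have hrem : v ∈ removedH a b S1 := by
      rw [rshH, Finset.mem_sdiff] at hnr
      push_neg at hnr
      exact hnr hsh
    exact removed_S2_zero hC hrem
  · rintro ⟨c1, c2⟩ h v
    have ha : 0 < a := h.pos
    have hb : 0 < b := v.pos
    have hn : 0 < a + b := by omega
    by_cases hS : S1 h = 0
    · exact Or.inl (HGC_of_S1_zero hn h v hS)
    by_cases hsh : v ∈ shadowH a b S1
    · by_cases hr : v ∈ rshH a b S1
      · exact c2 h (by simp [suppH, hS]) v hr
      · exact Or.inr (VGC_of_S2_zero hn h v (c1 v hsh hr))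
    · left
      have hsh' : ¬ ∀ e, balH a b S1 h e → dd a b (.inl h) (.inr v) ≤ dd a b (.inl h) e := by
        intro hc
        exact hsh (by simp only [shadowH, shH, Finset.mem_filter, Finset.mem_univ, true_and]
                      exact ⟨h, hc⟩)
      push_neg at hsh'
      obtain ⟨e, hbal, hlt⟩ := hsh'
      exact ⟨e, hlt, hbal⟩

end PartOne

/-! ### The walk `PP` and part (ii) -/

section Walk

variable {a b : ℕ}

/-- Step weight of an edge: `+1` for a vertical edge, `-S1 j` for a horizontal edge. -/
def stepf (S1 : Fin a → ℕ) : Edge a b → ℤ := Sum.elim (fun j => -(S1 j : ℤ)) (fun _ => 1)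

/-- Step weight at a cyclic position. -/
noncomputable def stepP (a b : ℕ) (S1 : Fin a → ℕ) (hn : 0 < a + b) (p : ℕ) : ℤ :=
  stepf S1 (edgeAt a b hn p)

/-- The walk: partial sums of step weights. -/
noncomputable def PP (a b : ℕ) (S1 : Fin a → ℕ) (hn : 0 < a + b) (k : ℕ) : ℤ :=
  ∑ p ∈ Finset.range k, stepP a b S1 hn p

lemma stepf_le_one (S1 : Fin a → ℕ) (e : Edge a b) : stepf S1 e ≤ 1 := by
  cases e with
  | inl j =>
    have : (0:ℤ) ≤ (S1 j : ℤ) := Int.natCast_nonneg _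
    show -(S1 j : ℤ) ≤ 1
    omega
  | inr i => exact le_refl _

lemma stepP_le_one (S1 : Fin a → ℕ) (hn : 0 < a + b) (p : ℕ) : stepP a b S1 hn p ≤ 1 :=
  stepf_le_one S1 _

lemma stepP_period (S1 : Fin a → ℕ) (hn : 0 < a + b) (p : ℕ) :
    stepP a b S1 hn (p + (a + b)) = stepP a b S1 hn p := by
  unfold stepP
  rw [edgeAt_period]

lemma PP_zero (S1 : Fin a → ℕ) (hn : 0 < a + b) : PP a b S1 hn 0 = 0 := by simp [PP]

lemma PP_succ (S1 : Fin a → ℕ) (hn : 0 < a + b) (k : ℕ) :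
    PP a b S1 hn (k + 1) = PP a b S1 hn k + stepP a b S1 hn k :=
  Finset.sum_range_succ _ _

lemma PP_shift (S1 : Fin a → ℕ) (hn : 0 < a + b) (t : ℕ) :
    PP a b S1 hn (t + (a + b)) = PP a b S1 hn t + PP a b S1 hn (a + b) := by
  induction t with
  | zero => rw [Nat.zero_add, PP_zero, zero_add]
  | succ t ih =>
    have h1 : t + 1 + (a + b) = (t + (a + b)) + 1 := by omega
    rw [h1, PP_succ, ih, stepP_period, PP_succ]
    ring

lemma fH_sum (S1 : Fin a → ℕ) (s : Finset (Edge a b)) :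
    (vcount a b s : ℤ) - (hsum a b S1 s : ℤ) = ∑ e ∈ s, stepf S1 e := by
  unfold vcount hsum
  rw [Finset.card_filter]
  push_cast
  rw [← Finset.sum_sub_distrib]
  apply Finset.sum_congr rfl
  intro e _
  cases e <;> simp [stepf]

lemma sum_range_offset (S1 : Fin a → ℕ) (hn : 0 < a + b) (q t : ℕ) :
    ∑ m ∈ Finset.range t, stepP a b S1 hn (q + m)
      = PP a b S1 hn (q + t) - PP a b S1 hn q := by
  induction t with
  | zero => simp
  | succ t ih =>
    rw [Finset.sum_range_succ, ih, show q + (t + 1) = (q + t) + 1 from rfl, PP_succ]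
    ring

lemma subpath_sum (hn : 0 < a + b) (S1 : Fin a → ℕ) (e f : Edge a b) :
    (vcount a b (subpath a b e f) : ℤ) - (hsum a b S1 (subpath a b e f) : ℤ)
      = PP a b S1 hn (pos a b e + dd a b e f + 1) - PP a b S1 hn (pos a b e) := by
  have hd := dd_lt hn e f
  rw [fH_sum, subpath_eq_image hn, Finset.sum_image (by
    intro m1 h1 m2 h2 hh
    rw [Finset.mem_coe, Finset.mem_range] at h1 h2
    exact edgeAt_injOn hn e (by omega) (by omega) hh)]
  have h2 := sum_range_offset S1 hn (pos a b e) (dd a b e f + 1)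
  rw [← add_assoc] at h2
  exact h2

lemma balH_iff (hn : 0 < a + b) (S1 : Fin a → ℕ) (h : Fin a) (e : Edge a b) :
    balH a b S1 h e ↔
      PP a b S1 hn (pos a b (.inl h) + dd a b (.inl h) e + 1)
        = PP a b S1 hn (pos a b (.inl h)) := by
  unfold balH
  have hs := subpath_sum hn S1 (.inl h) e
  constructor <;> intro hh <;> omega

lemma PP_n (hn : 0 < a + b) (S1 : Fin a → ℕ) :
    PP a b S1 hn (a + b) = (b : ℤ) - ((∑ j, S1 j : ℕ) : ℤ) := by
  unfold PP
  rw [← Fin.sum_univ_eq_sum_range (fun p => stepP a b S1 hn p)]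
  have h1 : ∀ x : Fin (a + b), stepP a b S1 hn x.1 = stepf S1 ((posEquiv a b).symm x) := by
    intro x
    unfold stepP edgeAt
    congr 2
    exact Fin.ext (Nat.mod_eq_of_lt x.2)
  rw [Finset.sum_congr rfl (fun x _ => h1 x), Equiv.sum_comp (posEquiv a b).symm (stepf S1)]
  rw [Fintype.sum_sum_type]
  have h2 : ∀ j : Fin a, stepf S1 (Sum.inl j : Edge a b) = -(S1 j : ℤ) := fun j => rfl
  have h3 : ∀ i : Fin b, stepf S1 (Sum.inr i : Edge a b) = 1 := fun i => rfl
  simp only [h2, h3, Finset.sum_const, Finset.card_univ, Fintype.card_fin, nsmul_eq_mul,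
    mul_one, Finset.sum_neg_distrib]
  push_cast
  ring

/-- The key bridge: `v` is in the shadow iff some point of the window before `v`
is at least as high as the walk just after `v`. -/
lemma shadow_iff (hn : 0 < a + b) (S1 : Fin a → ℕ) (v : Fin b) :
    v ∈ shadowH a b S1 ↔ ∃ i, pos a b (.inr v) + 1 ≤ i ∧ i < pos a b (.inr v) + 1 + (a + b) ∧
      PP a b S1 hn (pos a b (.inr v) + 1 + (a + b)) ≤ PP a b S1 hn i := by
  constructor
  · intro hv
    simp only [shadowH, shH, Finset.mem_filter, Finset.mem_univ, true_and] at hv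
    obtain ⟨h, hSH⟩ := hv
    set q := pos a b (.inl h) with hq
    set m' := dd a b (.inl h) (.inr v) with hm'
    have hm0 : 0 < m' := by
      rcases Nat.eq_zero_or_pos m' with h0 | h0
      · exfalso; exact absurd ((dd_eq_zero_iff hn).1 h0) (by simp)
      · exact h0
    have hmn : m' < a + b := dd_lt hn _ _
    have hstar : ∀ m, m < m' → PP a b S1 hn (q + m + 1) ≠ PP a b S1 hn q := by
      intro m hm hPP
      have hdd : dd a b (.inl h) (edgeAt a b hn (q + m)) = m := dd_edgeAt hn _ (by omega)
      have hb2 : balH a b S1 h (edgeAt a b hn (q + m)) := by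
        rw [balH_iff hn, hdd, ← hq]
        exact hPP
      have := hSH _ hb2
      rw [hdd] at this
      omega
    have hneg : ∀ j, 1 ≤ j → j ≤ m' → PP a b S1 hn (q + j) < PP a b S1 hn q := by
      intro j
      induction j with
      | zero => omega
      | succ t ih =>
        intro _ hj2
        have hstep : stepP a b S1 hn (q + t) ≤ 1 := stepP_le_one S1 hn _
        have hPPsucc : PP a b S1 hn (q + t + 1) = PP a b S1 hn (q + t) + stepP a b S1 hn (q + t) :=
          PP_succ S1 hn _
        have hne : PP a b S1 hn (q + t + 1) ≠ PP a b S1 hn q := hstar t (by omega)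
        rcases Nat.eq_zero_or_pos t with rfl | ht
        · have hq0 : stepP a b S1 hn q = -(S1 h : ℤ) := by
            unfold stepP
            rw [hq, edgeAt_pos]
            rfl
          have hS1 : (0:ℤ) ≤ (S1 h : ℤ) := Int.natCast_nonneg _
          simp only [Nat.add_zero, Nat.zero_add] at hPPsucc hne hstep ⊢
          omega
        · have hih := ih (by omega) (by omega)
          show PP a b S1 hn (q + (t+1)) < PP a b S1 hn q
          have : q + (t+1) = q + t + 1 := by omega
          rw [this]
          omega
    have hfin : PP a b S1 hn (q + m' + 1) ≤ PP a b S1 hn q := by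
      have h1 := hneg m' (by omega) (le_refl _)
      have h2 : PP a b S1 hn (q + m' + 1) = PP a b S1 hn (q + m') + stepP a b S1 hn (q + m') :=
        PP_succ S1 hn _
      have h3 := stepP_le_one S1 hn (q + m')
      omega
    have hposvlt : pos a b (.inr v) < a + b := pos_lt _
    have hqlt : q < a + b := pos_lt _
    set i := pos a b (.inr v) + 1 + (a + b) - 1 - m' with hi
    have hrel := ddRel hn (.inl h) (.inr v)
    have hiq : i = q ∨ i = q + (a + b) := by
      rcases le_or_gt (a + b) (q + m') with hcase | hcase
      · have hlt2 : q + m' - (a + b) < a + b := by omega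
        have h2 : (q + m') % (a + b) = q + m' - (a + b) := by
          rw [Nat.mod_eq_sub_mod hcase, Nat.mod_eq_of_lt hlt2]
        rw [← hq, ← hm'] at hrel
        left; omega
      · have h2 : (q + m') % (a + b) = q + m' := Nat.mod_eq_of_lt hcase
        rw [← hq, ← hm'] at hrel
        right; omega
    refine ⟨i, by omega, by omega, ?_⟩
    have hkvn : pos a b (.inr v) + 1 + (a + b) = i + m' + 1 := by omega
    rw [hkvn]
    rcases hiq with hiq | hiq
    · rw [hiq]; exact hfin
    · rw [hiq]
      have e1 : q + (a + b) + m' + 1 = (q + m' + 1) + (a + b) := by omega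
      rw [e1, PP_shift]
      rw [PP_shift]
      omega
  · rintro ⟨i0, hi1, hi2, hi3⟩
    have hposvlt : pos a b (.inr v) < a + b := pos_lt _
    set kv := pos a b (.inr v) + 1 with hkv
    set F := (Finset.Ico kv (kv + (a + b))).filter
        (fun i => PP a b S1 hn (kv + (a + b)) ≤ PP a b S1 hn i) with hF
    have hFne : F.Nonempty := ⟨i0, by
      rw [hF, Finset.mem_filter, Finset.mem_Ico]
      exact ⟨⟨hi1, hi2⟩, hi3⟩⟩
    have hiF := F.max'_mem hFne
    set i := F.max' hFne with hi
    have hiF' := Finset.mem_filter.1 hiF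
    rw [Finset.mem_Ico] at hiF'
    obtain ⟨⟨hik, hikn⟩, hiP⟩ := hiF'
    clear hiF
    have hmax : ∀ j, i < j → j < kv + (a + b) →
        PP a b S1 hn j < PP a b S1 hn (kv + (a + b)) := by
      intro j hj1 hj2
      by_contra hc
      push_neg at hc
      have hjF : j ∈ F := Finset.mem_filter.2 ⟨Finset.mem_Ico.2 ⟨by omega, hj2⟩, hc⟩
      have hle := Finset.le_max' F j hjF
      rw [← hi] at hle
      omega
    have hvkv : edgeAt a b hn (kv + (a + b) - 1) = .inr v := by
      have h5 : kv + (a + b) - 1 = pos a b (.inr v) + (a + b) := by omega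
      rw [h5, edgeAt_period, edgeAt_pos]
    have hitop : i ≠ kv + (a + b) - 1 := by
      intro hc
      have hstep : stepP a b S1 hn (kv + (a + b) - 1) = 1 := by
        unfold stepP
        rw [hvkv]
        rfl
      have h4 : PP a b S1 hn (kv + (a + b)) = PP a b S1 hn (kv + (a + b) - 1) + 1 := by
        calc PP a b S1 hn (kv + (a + b)) = PP a b S1 hn ((kv + (a + b) - 1) + 1) := by
              congr 1; omega
          _ = PP a b S1 hn (kv + (a + b) - 1) + stepP a b S1 hn (kv + (a + b) - 1) :=
              PP_succ S1 hn _
          _ = PP a b S1 hn (kv + (a + b) - 1) + 1 := by rw [hstep]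
      rw [← hc] at h4
      omega
    have histep : PP a b S1 hn (i + 1) < PP a b S1 hn i := by
      have h6 := hmax (i + 1) (by omega) (by omega)
      omega
    have hPPi := PP_succ S1 hn i
    obtain ⟨h, hh⟩ : ∃ h : Fin a, edgeAt a b hn i = .inl h := by
      rcases hEe : edgeAt a b hn i with z | w
      · exact ⟨z, rfl⟩
      · exfalso
        have h7 : stepP a b S1 hn i = 1 := by unfold stepP; rw [hEe]; rfl
        omega
    set q := pos a b (.inl h) with hq
    have hqi : q = i % (a + b) := by rw [hq, ← hh, pos_edgeAt]
    set m' := kv + (a + b) - 1 - i with hm'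
    have hm'1 : 1 ≤ m' := by omega
    have hm'n : m' < a + b := by omega
    have hqlt : q < a + b := pos_lt _
    have hiq : i = q ∨ i = q + (a + b) := by
      rcases lt_or_ge i (a + b) with hc | hc
      · left; rw [hqi, Nat.mod_eq_of_lt hc]
      · right
        have h8 : i - (a + b) < a + b := by omega
        rw [hqi, Nat.mod_eq_sub_mod hc, Nat.mod_eq_of_lt h8]
        omega
    have hdd : dd a b (.inl h) (.inr v) = m' := by
      apply dd_unique hn hm'n
      rcases hiq with hiq | hiq
      · have h9 : q + m' = pos a b (.inr v) + (a + b) := by omega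
        rw [h9, Nat.add_mod_right, Nat.mod_eq_of_lt hposvlt]
      · have h9 : q + m' = pos a b (.inr v) := by omega
        rw [h9, Nat.mod_eq_of_lt hposvlt]
    simp only [shadowH, shH, Finset.mem_filter, Finset.mem_univ, true_and]
    refine ⟨h, ?_⟩
    intro e hbal
    rw [hdd]
    by_contra hc
    push_neg at hc
    set m := dd a b (.inl h) e with hm
    rw [balH_iff hn] at hbal
    rw [← hq, ← hm] at hbal
    have htrans : PP a b S1 hn (i + m + 1) = PP a b S1 hn i := by
      rcases hiq with hiq | hiq
      · rw [hiq]; exact hbal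
      · rw [hiq]
        have e1 : q + (a + b) + m + 1 = (q + m + 1) + (a + b) := by omega
        rw [e1, PP_shift, PP_shift]
        omega
    have := hmax (i + m + 1) (by omega) (by omega)
    omega

lemma not_shadow_iff (hn : 0 < a + b) (S1 : Fin a → ℕ) (v : Fin b) :
    v ∉ shadowH a b S1 ↔ ∀ i, pos a b (.inr v) + 1 ≤ i → i < pos a b (.inr v) + 1 + (a + b) →
      PP a b S1 hn i < PP a b S1 hn (pos a b (.inr v) + 1 + (a + b)) := by
  rw [shadow_iff hn]
  simp only [not_exists, not_and, not_le]

lemma recset_card (hn : 0 < a + b) (S1 : Fin a → ℕ) :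
    ((Finset.Icc 1 (a + b)).filter (fun k => ∀ i, k ≤ i → i < k + (a + b) →
        PP a b S1 hn i < PP a b S1 hn (k + (a + b)))).card
      = (PP a b S1 hn (a + b)).toNat := by
  set T := PP a b S1 hn (a + b) with hT
  rcases le_or_gt T 0 with hT0 | hT0
  · have hemp : (Finset.Icc 1 (a + b)).filter (fun k => ∀ i, k ≤ i → i < k + (a + b) →
        PP a b S1 hn i < PP a b S1 hn (k + (a + b))) = ∅ := by
      rw [Finset.filter_eq_empty_iff]
      intro k _
      intro hR
      have h1 := hR k (le_refl _) (by omega)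
      have h2 : PP a b S1 hn (k + (a + b)) = PP a b S1 hn k + T := PP_shift S1 hn k
      omega
    rw [hemp]
    simp
    omega
  · have hne : (Finset.Icc 1 (a + b)).Nonempty := ⟨1, by rw [Finset.mem_Icc]; omega⟩
    set M := (Finset.Icc 1 (a + b)).sup' hne (PP a b S1 hn) with hM
    have hMa : ∀ j ∈ Finset.Icc 1 (a + b), PP a b S1 hn j ≤ M := fun j hj => Finset.le_sup' _ hj
    have hMT : T ≤ M := hMa (a + b) (by rw [Finset.mem_Icc]; omega)
    have himg : (((Finset.Icc 1 (a + b)).filter (fun k => ∀ i, k ≤ i → i < k + (a + b) →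
        PP a b S1 hn i < PP a b S1 hn (k + (a + b)))).image
          (fun k => PP a b S1 hn (k + (a + b)))) = Finset.Ioc M (M + T) := by
      ext c
      simp only [Finset.mem_image, Finset.mem_filter, Finset.mem_Icc, Finset.mem_Ioc]
      constructor
      · rintro ⟨k, ⟨⟨hk1, hk2⟩, hR⟩, rfl⟩
        constructor
        · rw [hM, Finset.sup'_lt_iff]
          intro j hj
          rw [Finset.mem_Icc] at hj
          rcases le_or_gt k j with hc | hc
          · exact hR j hc (by omega)
          · have h3 := hR (j + (a + b)) (by omega) (by omega)
            have h4 : PP a b S1 hn (j + (a + b)) = PP a b S1 hn j + T := PP_shift S1 hn j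
            omega
        · have h4 : PP a b S1 hn (k + (a + b)) = PP a b S1 hn k + T := PP_shift S1 hn k
          have h5 := hMa k (by rw [Finset.mem_Icc]; omega)
          omega
      · rintro ⟨hc1, hc2⟩
        have hc'pos : 0 < c - T := by omega
        have hGne : ((Finset.Icc 1 (a + b)).filter
            (fun j => c - T ≤ PP a b S1 hn j)).Nonempty := by
          obtain ⟨j0, hj0, hj0e⟩ := Finset.exists_mem_eq_sup' hne (PP a b S1 hn)
          refine ⟨j0, Finset.mem_filter.2 ⟨hj0, ?_⟩⟩
          have hPPj0 : PP a b S1 hn j0 = M := by rw [hM]; exact hj0e.symm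
          omega
        have hkmem := Finset.min'_mem _ hGne
        set k := ((Finset.Icc 1 (a + b)).filter (fun j => c - T ≤ PP a b S1 hn j)).min' hGne
          with hk
        have hkmem' := Finset.mem_filter.1 hkmem
        rw [Finset.mem_Icc] at hkmem'
        obtain ⟨⟨hk1, hk2⟩, hkc⟩ := hkmem'
        clear hkmem
        have hmin : ∀ j, 1 ≤ j → j < k → PP a b S1 hn j < c - T := by
          intro j hj1 hj2
          by_contra hcc
          push_neg at hcc
          have hjmem : j ∈ (Finset.Icc 1 (a + b)).filter (fun j => c - T ≤ PP a b S1 hn j) := by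
            rw [Finset.mem_filter, Finset.mem_Icc]
            exact ⟨⟨hj1, by omega⟩, hcc⟩
          have h10 := Finset.min'_le _ j hjmem
          rw [← hk] at h10
          omega
        have hPPk : PP a b S1 hn k = c - T := by
          have h5 : PP a b S1 hn k = PP a b S1 hn (k - 1) + stepP a b S1 hn (k - 1) := by
            calc PP a b S1 hn k = PP a b S1 hn ((k - 1) + 1) := by congr 1; omega
              _ = _ := PP_succ S1 hn _
          have h6 : PP a b S1 hn (k - 1) < c - T := by
            rcases Nat.eq_zero_or_pos (k - 1) with h7 | h7
            · rw [h7, PP_zero]; omega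
            · exact hmin (k - 1) h7 (by omega)
          have h7 := stepP_le_one S1 hn (k - 1)
          omega
        refine ⟨k, ⟨⟨hk1, hk2⟩, ?_⟩, ?_⟩
        · intro i hi1 hi2
          have hPPkn : PP a b S1 hn (k + (a + b)) = PP a b S1 hn k + T := PP_shift S1 hn k
          rcases le_or_gt i (a + b) with hc3 | hc3
          · have := hMa i (by rw [Finset.mem_Icc]; omega)
            omega
          · have h8 : PP a b S1 hn i = PP a b S1 hn (i - (a + b)) + T := by
              calc PP a b S1 hn i = PP a b S1 hn ((i - (a + b)) + (a + b)) := by congr 1; omega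
                _ = _ := PP_shift S1 hn _
            have h9 := hmin (i - (a + b)) (by omega) (by omega)
            omega
        · have hPPkn : PP a b S1 hn (k + (a + b)) = PP a b S1 hn k + T := PP_shift S1 hn k
          omega
    have hinj : Set.InjOn (fun k => PP a b S1 hn (k + (a + b)))
        ((Finset.Icc 1 (a + b)).filter (fun k => ∀ i, k ≤ i → i < k + (a + b) →
          PP a b S1 hn i < PP a b S1 hn (k + (a + b)))) := by
      intro k1 h1 k2 h2 hkk
      simp only [Finset.coe_filter, Set.mem_setOf_eq, Finset.mem_Icc] at h1 h2
      simp only at hkk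
      rcases lt_trichotomy k1 k2 with hc | hc | hc
      · exfalso
        have := h2.2 (k1 + (a + b)) (by omega) (by omega)
        omega
      · exact hc
      · exfalso
        have := h1.2 (k2 + (a + b)) (by omega) (by omega)
        omega
    have hcard := Finset.card_image_of_injOn hinj
    rw [himg] at hcard
    rw [← hcard, Int.card_Ioc]
    congr 1
    omega

lemma part_two {a b : ℕ} (S1 : Fin a → ℕ) :
    (shadowH a b S1).card = min b (∑ h, S1 h) := by
  rcases Nat.eq_zero_or_pos a with rfl | ha
  · have hemp : shadowH 0 b S1 = ∅ := by
      rw [Finset.eq_empty_iff_forall_notMem]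
      intro v hv
      simp only [shadowH, Finset.mem_filter] at hv
      obtain ⟨-, h, -⟩ := hv
      exact h.elim0
    rw [hemp]
    simp
  rcases Nat.eq_zero_or_pos b with rfl | hb
  · have hemp : shadowH a 0 S1 = ∅ := Finset.eq_empty_of_forall_notMem (fun v _ => v.elim0)
    rw [hemp]
    simp
  have hn : 0 < a + b := by omega
  have hbij : (Finset.univ.filter (fun v : Fin b => v ∉ shadowH a b S1)).card
      = ((Finset.Icc 1 (a + b)).filter (fun k => ∀ i, k ≤ i → i < k + (a + b) →
          PP a b S1 hn i < PP a b S1 hn (k + (a + b)))).card := by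
    apply Finset.card_nbij (i := fun v => pos a b (.inr v) + 1)
    · intro v hv
      rw [Finset.mem_coe, Finset.mem_filter] at hv
      rw [Finset.mem_coe, Finset.mem_filter, Finset.mem_Icc]
      have h1 := pos_lt (Sum.inr v : Edge a b)
      exact ⟨by beta_reduce; omega, (not_shadow_iff hn S1 v).1 hv.2⟩
    · intro x hx y hy hxy
      simp only at hxy
      have h2 : pos a b (Sum.inr x) = pos a b (Sum.inr y) := by omega
      have := pos_injective h2
      exact Sum.inr_injective this
    · intro k hk
      simp only [Finset.coe_filter, Set.mem_setOf_eq, Finset.mem_Icc] at hk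
      obtain ⟨⟨hk1, hk2⟩, hRk⟩ := hk
      have h1 : PP a b S1 hn (k + (a + b) - 1) < PP a b S1 hn (k + (a + b)) :=
        hRk _ (by omega) (by omega)
      have h2 : PP a b S1 hn (k + (a + b)) = PP a b S1 hn (k + (a + b) - 1)
          + stepP a b S1 hn (k + (a + b) - 1) := by
        calc PP a b S1 hn (k + (a + b)) = PP a b S1 hn ((k + (a + b) - 1) + 1) := by
              congr 1; omega
          _ = _ := PP_succ S1 hn _
      have h3 : 0 < stepP a b S1 hn (k + (a + b) - 1) := by omega
      obtain ⟨w, hw⟩ : ∃ w : Fin b, edgeAt a b hn (k + (a + b) - 1) = .inr w := by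
        rcases hEe : edgeAt a b hn (k + (a + b) - 1) with z | w
        · exfalso
          have h4 : stepP a b S1 hn (k + (a + b) - 1) = -(S1 z : ℤ) := by
            unfold stepP; rw [hEe]; rfl
          have h5 : (0:ℤ) ≤ (S1 z : ℤ) := Int.natCast_nonneg _
          omega
        · exact ⟨w, rfl⟩
      have hposw : pos a b (.inr w) = k - 1 := by
        have h6 : k + (a + b) - 1 = (k - 1) + (a + b) := by omega
        rw [← hw, pos_edgeAt, h6, Nat.add_mod_right, Nat.mod_eq_of_lt (by omega)]
      refine ⟨w, ?_, ?_⟩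
      · simp only [Finset.coe_filter, Set.mem_setOf_eq, Finset.mem_univ, true_and]
        rw [not_shadow_iff hn, hposw]
        have h7 : k - 1 + 1 = k := by omega
        rw [h7]
        exact hRk
      · simp only [hposw]
        omega
  have hpart : (Finset.univ.filter (fun v : Fin b => v ∈ shadowH a b S1)).card
      + (Finset.univ.filter (fun v : Fin b => v ∉ shadowH a b S1)).card = b := by
    rw [Finset.card_filter_add_card_filter_not]
    simp
  have hsh : (Finset.univ.filter (fun v : Fin b => v ∈ shadowH a b S1)) = shadowH a b S1 := by
    ext v; simp
  rw [hsh] at hpart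
  rw [hbij, recset_card hn S1] at hpart
  have hPPn := PP_n hn S1
  omega

end Walk

/-! ### Duality: reversing the path swaps horizontal and vertical -/

section Duality

variable {a b : ℕ}

/-- Reversal of indices. -/
def revA (a : ℕ) (j : Fin a) : Fin a := ⟨a - 1 - j.1, by have := j.2; have := j.pos; omega⟩

lemma revA_revA {a : ℕ} (j : Fin a) : revA a (revA a j) = j := by
  apply Fin.ext
  show a - 1 - (a - 1 - j.1) = j.1
  have := j.2
  omega

/-- The reversal map on edges. -/
def sig (a b : ℕ) : Edge a b → Edge b a
  | .inl j => .inr (revA a j)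
  | .inr i => .inl (revA b i)

lemma sig_sig (e : Edge a b) : sig b a (sig a b e) = e := by
  cases e with
  | inl j => show Sum.inl (revA a (revA a j)) = Sum.inl j; rw [revA_revA]
  | inr i => show Sum.inr (revA b (revA b i)) = Sum.inr i; rw [revA_revA]

lemma sig_injective : Function.Injective (sig a b) := fun e f h => by
  have := congrArg (sig b a) h
  rwa [sig_sig, sig_sig] at this

lemma ceil_add_floor {c : ℕ} (d m : ℕ) (hc : 0 < c) (hm : m < c) :
    ((m + 1) * d + c - 1) / c + ((c - 1 - m) * d) / c = d := by
  set s := (c - 1 - m) * d with hs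
  have hst : s + (m + 1) * d = c * d := by
    rw [hs, ← Nat.add_mul]
    congr 1
    omega
  have hdm := Nat.div_add_mod s c
  have hmod := Nat.mod_lt s hc
  have hsd : s / c ≤ d := by
    have h1 : s ≤ c * d := by omega
    have h2 : s / c ≤ c * d / c := Nat.div_le_div_right h1
    rwa [Nat.mul_div_cancel_left _ hc] at h2
  have hmul2 : c * (d - s / c) + c * (s / c) = c * d := by
    rw [← Nat.mul_add]
    congr 1
    omega
  have hkey : (m + 1) * d + c - 1 = c * (d - s / c) + (c - 1 - s % c) := by omega
  have hlt : (c - 1 - s % c) / c = 0 := Nat.div_eq_of_lt (by omega)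
  rw [hkey, Nat.mul_add_div hc, hlt]
  omega

/-- For a vertical edge `x` of `D_{b,a}`: depth and reversed height are complementary. -/
lemma dep_rev_ht (x : Fin a) : dep b a x + ht a b (revA a x) = b :=
  ceil_add_floor (c := a) b x.1 x.pos x.2

lemma ht_rev_dep (h : Fin a) : dep b a (revA a h) + ht a b h = b := by
  have h1 := dep_rev_ht (b := b) (revA a h)
  rwa [revA_revA] at h1

lemma dep_rev_ht' (x : Fin b) : dep a b x + ht b a (revA b x) = a :=
  ceil_add_floor (c := b) a x.1 x.pos x.2

lemma pos_sig (e : Edge a b) : pos b a (sig a b e) = a + b - 1 - pos a b e := by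
  cases e with
  | inl j =>
    have h1 := ht_rev_dep (b := b) j
    have h2 := ht_le a b j
    have h3 := j.2
    show (a - 1 - j.1) + dep b a (revA a j) = a + b - 1 - (j.1 + ht a b j)
    omega
  | inr i =>
    have h1 := dep_rev_ht' (a := a) i
    have h2 := dep_le a b i
    have h3 := i.2
    show (b - 1 - i.1) + ht b a (revA b i) = a + b - 1 - (i.1 + dep a b i)
    omega

lemma dd_sig (hn : 0 < a + b) (e f : Edge a b) :
    dd b a (sig a b f) (sig a b e) = dd a b e f := by
  have h1 := pos_lt e
  have h2 := pos_lt f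
  unfold dd
  rw [pos_sig, pos_sig]
  have h3 : a + b - 1 - pos a b e + (b + a) - (a + b - 1 - pos a b f)
      = pos a b f + (a + b) - pos a b e := by omega
  rw [h3, Nat.add_comm b a]

lemma subpath_sig (hn : 0 < a + b) (e f : Edge a b) :
    subpath b a (sig a b f) (sig a b e) = (subpath a b e f).image (sig a b) := by
  ext g'
  rw [Finset.mem_image]
  constructor
  · intro hg'
    refine ⟨sig b a g', ?_, sig_sig g'⟩
    have k1 : dd b a (sig a b f) g' = dd a b (sig b a g') f := by
      conv_lhs => rw [show g' = sig a b (sig b a g') from (sig_sig g').symm]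
      exact dd_sig hn (sig b a g') f
    have k2 : dd b a (sig a b f) (sig a b e) = dd a b e f := dd_sig hn e f
    rw [mem_subpath] at hg'
    rw [k1, k2] at hg'
    rw [mem_subpath]
    exact (dd_mem_iff hn).2 hg'
  · rintro ⟨g, hg, rfl⟩
    rw [mem_subpath] at hg ⊢
    rw [dd_sig hn g f, dd_sig hn e f]
    exact (dd_mem_iff hn).1 hg

lemma vcount_image_sig (s : Finset (Edge a b)) :
    vcount b a (s.image (sig a b)) = hcount a b s := by
  unfold vcount hcount
  rw [Finset.card_filter, Finset.card_filter,
    Finset.sum_image (fun x _ y _ h => sig_injective h)]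
  apply Finset.sum_congr rfl
  intro e _
  cases e <;> rfl

lemma hcount_image_sig (s : Finset (Edge a b)) :
    hcount b a (s.image (sig a b)) = vcount a b s := by
  unfold vcount hcount
  rw [Finset.card_filter, Finset.card_filter,
    Finset.sum_image (fun x _ y _ h => sig_injective h)]
  apply Finset.sum_congr rfl
  intro e _
  cases e <;> rfl

lemma hsum_image_sig (S2 : Fin b → ℕ) (s : Finset (Edge a b)) :
    hsum b a (fun j => S2 (revA b j)) (s.image (sig a b)) = vsum a b S2 s := by
  unfold hsum vsum
  rw [Finset.sum_image (fun x _ y _ h => sig_injective h)]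
  apply Finset.sum_congr rfl
  intro e _
  cases e with
  | inl j => rfl
  | inr i => show S2 (revA b (revA b i)) = S2 i; rw [revA_revA]

lemma vsum_image_sig (S1 : Fin a → ℕ) (s : Finset (Edge a b)) :
    vsum b a (fun i => S1 (revA a i)) (s.image (sig a b)) = hsum a b S1 s := by
  unfold hsum vsum
  rw [Finset.sum_image (fun x _ y _ h => sig_injective h)]
  apply Finset.sum_congr rfl
  intro e _
  cases e with
  | inl j => show S1 (revA a (revA a j)) = S1 j; rw [revA_revA]
  | inr i => rfl

lemma balV_sig (hn : 0 < a + b) (S2 : Fin b → ℕ) (e : Edge a b) (v : Fin b) :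
    balV a b S2 e v ↔ balH b a (fun j => S2 (revA b j)) (revA b v) (sig a b e) := by
  unfold balV balH
  have h1 : subpath b a (.inl (revA b v)) (sig a b e)
      = (subpath a b e (.inr v)).image (sig a b) := subpath_sig hn e (.inr v)
  rw [h1, vcount_image_sig, hsum_image_sig]

lemma balH_sig (hn : 0 < a + b) (S1 : Fin a → ℕ) (h : Fin a) (e : Edge a b) :
    balH a b S1 h e ↔ balV b a (fun i => S1 (revA a i)) (sig a b e) (revA a h) := by
  unfold balH balV
  have h1 : subpath b a (sig a b e) (.inr (revA a h))
      = (subpath a b (.inl h) e).image (sig a b) := subpath_sig hn (.inl h) e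
  rw [h1, hcount_image_sig, vsum_image_sig]

lemma VGC_sig (hn : 0 < a + b) (S2 : Fin b → ℕ) (h : Fin a) (v : Fin b) :
    VGC a b S2 h v ↔ HGC b a (fun j => S2 (revA b j)) (revA b v) (revA a h) := by
  constructor
  · rintro ⟨e, h0, hle, hbal⟩
    refine ⟨sig a b e, ?_, ?_⟩
    · have k1 : dd b a (.inl (revA b v)) (sig a b e) = dd a b e (.inr v) :=
        dd_sig hn e (.inr v)
      have k2 : dd b a (.inl (revA b v)) (.inr (revA a h)) = dd a b (.inl h) (.inr v) :=
        dd_sig hn (.inl h) (.inr v)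
      rw [k1, k2]
      exact (dd_flip hn).2 ⟨h0, hle⟩
    · exact (balV_sig hn S2 e v).1 hbal
  · rintro ⟨e', hlt, hbal'⟩
    have he' : e' = sig a b (sig b a e') := (sig_sig e').symm
    have k1 : dd b a (.inl (revA b v)) e' = dd a b (sig b a e') (.inr v) := by
      conv_lhs => rw [he']
      exact dd_sig hn (sig b a e') (.inr v)
    have k2 : dd b a (.inl (revA b v)) (.inr (revA a h)) = dd a b (.inl h) (.inr v) :=
      dd_sig hn (.inl h) (.inr v)
    rw [k1, k2] at hlt
    have hd := (dd_flip hn).1 hlt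
    refine ⟨sig b a e', hd.1, hd.2, ?_⟩
    rw [he'] at hbal'
    exact (balV_sig hn S2 (sig b a e') v).2 hbal'

lemma HGC_sig (hn : 0 < a + b) (S1 : Fin a → ℕ) (h : Fin a) (v : Fin b) :
    HGC a b S1 h v ↔ VGC b a (fun i => S1 (revA a i)) (revA b v) (revA a h) := by
  constructor
  · rintro ⟨e, hlt, hbal⟩
    have k1 : dd b a (.inl (revA b v)) (sig a b e) = dd a b e (.inr v) :=
      dd_sig hn e (.inr v)
    have k2 : dd b a (.inl (revA b v)) (.inr (revA a h)) = dd a b (.inl h) (.inr v) :=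
      dd_sig hn (.inl h) (.inr v)
    have hd := (dd_flip' hn).1 hlt
    refine ⟨sig a b e, by rw [k1]; exact hd.1, by rw [k1, k2]; exact hd.2, ?_⟩
    exact (balH_sig hn S1 h e).1 hbal
  · rintro ⟨e', h0, hle, hbal'⟩
    have he' : e' = sig a b (sig b a e') := (sig_sig e').symm
    have k1 : dd b a (.inl (revA b v)) e' = dd a b (sig b a e') (.inr v) := by
      conv_lhs => rw [he']
      exact dd_sig hn (sig b a e') (.inr v)
    have k2 : dd b a (.inl (revA b v)) (.inr (revA a h)) = dd a b (.inl h) (.inr v) :=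
      dd_sig hn (.inl h) (.inr v)
    rw [k1] at h0
    rw [k1, k2] at hle
    refine ⟨sig b a e', (dd_flip' hn).2 ⟨h0, hle⟩, ?_⟩
    rw [he'] at hbal'
    exact (balH_sig hn S1 h (sig b a e')).2 hbal'

lemma Compatible_sig (S1 : Fin a → ℕ) (S2 : Fin b → ℕ) :
    Compatible a b S1 S2
      ↔ Compatible b a (fun j => S2 (revA b j)) (fun i => S1 (revA a i)) := by
  constructor
  · intro hC h' v'
    have hn : 0 < a + b := by have := h'.pos; have := v'.pos; omega
    rcases hC (revA a v') (revA b h') with hH | hV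
    · right
      have := (HGC_sig hn S1 (revA a v') (revA b h')).1 hH
      rwa [revA_revA, revA_revA] at this
    · left
      have := (VGC_sig hn S2 (revA a v') (revA b h')).1 hV
      rwa [revA_revA, revA_revA] at this
  · intro hC h v
    have hn : 0 < a + b := by have := h.pos; have := v.pos; omega
    rcases hC (revA b v) (revA a h) with hH | hV
    · right; exact (VGC_sig hn S2 h v).2 hH
    · left; exact (HGC_sig hn S1 h v).2 hV

lemma shV_sig (hn : 0 < a + b) (S2 : Fin b → ℕ) (h : Fin a) (v : Fin b) :
    h ∈ shV a b S2 v ↔ revA a h ∈ shH b a (fun j => S2 (revA b j)) (revA b v) := by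
  simp only [shV, shH, Finset.mem_filter, Finset.mem_univ, true_and]
  constructor
  · intro hyp e' hbal'
    have hbal : balV a b S2 (sig b a e') v := by
      apply (balV_sig hn S2 (sig b a e') v).2
      rwa [show sig a b (sig b a e') = e' from sig_sig e']
    have hle := hyp (sig b a e') hbal
    have k2 : dd b a (.inl (revA b v)) (.inr (revA a h)) = dd a b (.inl h) (.inr v) :=
      dd_sig hn (.inl h) (.inr v)
    have k1 : dd b a (.inl (revA b v)) e' = dd a b (sig b a e') (.inr v) := by
      conv_lhs => rw [show e' = sig a b (sig b a e') from (sig_sig e').symm]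
      exact dd_sig hn (sig b a e') (.inr v)
    omega
  · intro hyp e hbal
    have hbal' := (balV_sig hn S2 e v).1 hbal
    have hle := hyp (sig a b e) hbal'
    have k2 : dd b a (.inl (revA b v)) (.inr (revA a h)) = dd a b (.inl h) (.inr v) :=
      dd_sig hn (.inl h) (.inr v)
    have k1 : dd b a (.inl (revA b v)) (sig a b e) = dd a b e (.inr v) := dd_sig hn e (.inr v)
    omega

lemma mem_shadowV_sig (S2 : Fin b → ℕ) (h : Fin a) :
    h ∈ shadowV a b S2 ↔ revA a h ∈ shadowH b a (fun j => S2 (revA b j)) := by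
  simp only [shadowV, shadowH, Finset.mem_filter, Finset.mem_univ, true_and]
  constructor
  · rintro ⟨v, hv⟩
    have hn : 0 < a + b := by have := h.pos; have := v.pos; omega
    exact ⟨revA b v, (shV_sig hn S2 h v).1 hv⟩
  · rintro ⟨h'', hv⟩
    have hn : 0 < a + b := by have := h.pos; have := h''.pos; omega
    refine ⟨revA b h'', ?_⟩
    apply (shV_sig hn S2 h (revA b h'')).2
    rwa [revA_revA]

lemma card_dep_ht (ha : 0 < a) (hb : 0 < b) (h : Fin a) :
    (Finset.univ.filter fun h2 : Fin a =>
        dep b a h2 = dep b a (revA a h) ∧ h2.1 < (revA a h).1).card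
      = (Finset.univ.filter fun h2 : Fin a => ht a b h2 = ht a b h ∧ h.1 < h2.1).card := by
  apply Finset.card_nbij (i := revA a)
  · intro x hx
    rw [Finset.mem_coe, Finset.mem_filter] at hx
    obtain ⟨-, hx1, hx2⟩ := hx
    rw [Finset.mem_coe, Finset.mem_filter]
    refine ⟨Finset.mem_univ _, ?_, ?_⟩
    · have e1 := dep_rev_ht (b := b) x
      have e2 := ht_rev_dep (b := b) h
      have e3 := ht_le a b h
      have e4 := ht_le a b (revA a x)
      omega
    · show h.1 < a - 1 - x.1
      have hx2' : x.1 < a - 1 - h.1 := hx2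
      have := h.2
      have := x.2
      omega
  · intro x _ y _ hxy
    have := congrArg (revA a) hxy
    rwa [revA_revA, revA_revA] at this
  · intro y hy
    simp only [Finset.coe_filter, Set.mem_setOf_eq, Finset.mem_univ, true_and] at hy
    obtain ⟨hy1, hy2⟩ := hy
    refine ⟨revA a y, ?_, revA_revA y⟩
    simp only [Finset.coe_filter, Set.mem_setOf_eq, Finset.mem_univ, true_and]
    constructor
    · have e1 := dep_rev_ht (b := b) (revA a y)
      have e2 := ht_rev_dep (b := b) h
      have e3 := ht_le a b h
      have e4 : ht a b (revA a (revA a y)) = ht a b y := by rw [revA_revA]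
      omega
    · show (revA a y).1 < a - 1 - h.1
      show a - 1 - y.1 < a - 1 - h.1
      have := h.2
      have := y.2
      omega

lemma mem_removedV_sig (S2 : Fin b → ℕ) (h : Fin a) :
    h ∈ removedV a b S2 ↔ revA a h ∈ removedH b a (fun j => S2 (revA b j)) := by
  simp only [removedV, removedH, Finset.mem_filter, Finset.mem_univ, true_and]
  constructor
  · rintro ⟨vl, hvl, hcard⟩
    have ha : 0 < a := h.pos
    have hb : 0 < b := vl.pos
    have hhtb : ht a b h < b := ht_lt a hb h
    have hdep := ht_rev_dep (b := b) h
    refine ⟨revA b vl, ?_, ?_⟩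
    · show (b - 1 - vl.1) + 1 = dep b a (revA a h)
      have := vl.2
      omega
    · rw [card_dep_ht ha hb h]
      simp only [revA_revA]
      exact hcard
  · rintro ⟨hd, hdep', hcard'⟩
    have ha : 0 < a := h.pos
    have hb : 0 < b := hd.pos
    have hhtb : ht a b h < b := ht_lt a hb h
    have hdep := ht_rev_dep (b := b) h
    refine ⟨revA b hd, ?_, ?_⟩
    · show (revA b hd).1 = ht a b h
      show b - 1 - hd.1 = ht a b h
      have := hd.2
      omega
    · rw [← card_dep_ht ha hb h]
      exact hcard'

lemma mem_rshV_sig (S2 : Fin b → ℕ) (h : Fin a) :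
    h ∈ rshV a b S2 ↔ revA a h ∈ rshH b a (fun j => S2 (revA b j)) := by
  rw [rshV, rshH, Finset.mem_sdiff, Finset.mem_sdiff, mem_shadowV_sig, mem_removedV_sig]

lemma part_three {a b : ℕ} (S1 : Fin a → ℕ) (S2 : Fin b → ℕ) :
    Compatible a b S1 S2 ↔
      ((∀ h ∈ shadowV a b S2, h ∉ rshV a b S2 → S1 h = 0) ∧
        ∀ v ∈ suppV b S2, ∀ h ∈ rshV a b S2, HGC a b S1 h v ∨ VGC a b S2 h v) := by
  rw [Compatible_sig S1 S2, part_one (fun j => S2 (revA b j)) (fun i => S1 (revA a i))]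
  constructor
  · rintro ⟨c1, c2⟩
    constructor
    · intro h hsh hnr
      have := c1 (revA a h) ((mem_shadowV_sig S2 h).1 hsh)
        (fun hc => hnr ((mem_rshV_sig S2 h).2 hc))
      simpa [revA_revA] using this
    · intro v hv h hr
      have hn : 0 < a + b := by have := h.pos; have := v.pos; omega
      have hsupp : revA b v ∈ suppH b (fun j => S2 (revA b j)) := by
        simp only [suppH, Finset.mem_filter, Finset.mem_univ, true_and, revA_revA]
        simp only [suppV, Finset.mem_filter, Finset.mem_univ, true_and] at hv
        exact hv
      have hmem := c2 (revA b v) hsupp (revA a h) ((mem_rshV_sig S2 h).1 hr)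
      rcases hmem with hH | hV
      · right; exact (VGC_sig hn S2 h v).2 hH
      · left; exact (HGC_sig hn S1 h v).2 hV
  · rintro ⟨c1, c2⟩
    constructor
    · intro h' hsh hnr
      have h1 : revA a h' ∈ shadowV a b S2 := by
        rw [mem_shadowV_sig, revA_revA]
        exact hsh
      have h2 : revA a h' ∉ rshV a b S2 := by
        rw [mem_rshV_sig, revA_revA]
        exact hnr
      exact c1 (revA a h') h1 h2
    · intro h'' hsupp v' hr
      have hn : 0 < a + b := by have := h''.pos; have := v'.pos; omega
      have hv : revA b h'' ∈ suppV b S2 := by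
        simp only [suppV, Finset.mem_filter, Finset.mem_univ, true_and]
        simp only [suppH, Finset.mem_filter, Finset.mem_univ, true_and] at hsupp
        exact hsupp
      have hrh : revA a v' ∈ rshV a b S2 := by
        rw [mem_rshV_sig, revA_revA]
        exact hr
      rcases c2 (revA b h'') hv (revA a v') hrh with hH | hV
      · right
        have := (HGC_sig hn S1 (revA a v') (revA b h'')).1 hH
        rwa [revA_revA, revA_revA] at this
      · left
        have := (VGC_sig hn S2 (revA a v') (revA b h'')).1 hV
        rwa [revA_revA, revA_revA] at this

lemma part_four {a b : ℕ} (S2 : Fin b → ℕ) :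
    (shadowV a b S2).card = min a (∑ v, S2 v) := by
  have himg : shadowV a b S2 = (shadowH b a (fun j => S2 (revA b j))).image (revA a) := by
    ext h
    rw [Finset.mem_image]
    constructor
    · intro hh
      exact ⟨revA a h, (mem_shadowV_sig S2 h).1 hh, revA_revA h⟩
    · rintro ⟨y, hy, rfl⟩
      rw [mem_shadowV_sig, revA_revA]
      exact hy
  rw [himg, Finset.card_image_of_injective _ (fun x y hxy => by
    have := congrArg (revA a) hxy
    rwa [revA_revA, revA_revA] at this)]
  rw [part_two]
  congr 1
  exact Fintype.sum_bijective (revA b)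
    (Function.Involutive.bijective (fun x => revA_revA x)) _ _ (fun j => rfl)

end Duality

/-- **Shadows control compatibility.**
(i) `S2 ∈ C(S1)` iff `S2` vanishes on `sh(S1) ∖ rsh(S1)` and one of (HGC), (VGC)
holds for every `h ∈ supp(S1)` and `v ∈ rsh(S1)`; (ii) `|sh(S1)| = min(a2, |S1|)`.
Symmetrically for vertical gradings. -/
theorem shadows_lemma (a1 a2 : ℕ) :
    (∀ (S1 : Fin a1 → ℕ) (S2 : Fin a2 → ℕ),
      Compatible a1 a2 S1 S2 ↔
        ((∀ v ∈ shadowH a1 a2 S1, v ∉ rshH a1 a2 S1 → S2 v = 0) ∧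
          ∀ h ∈ suppH a1 S1, ∀ v ∈ rshH a1 a2 S1, HGC a1 a2 S1 h v ∨ VGC a1 a2 S2 h v)) ∧
    (∀ S1 : Fin a1 → ℕ, (shadowH a1 a2 S1).card = min a2 (∑ h, S1 h)) ∧
    (∀ (S1 : Fin a1 → ℕ) (S2 : Fin a2 → ℕ),
      Compatible a1 a2 S1 S2 ↔
        ((∀ h ∈ shadowV a1 a2 S2, h ∉ rshV a1 a2 S2 → S1 h = 0) ∧
          ∀ v ∈ suppV a2 S2, ∀ h ∈ rshV a1 a2 S2, HGC a1 a2 S1 h v ∨ VGC a1 a2 S2 h v)) ∧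
    (∀ S2 : Fin a2 → ℕ, (shadowV a1 a2 S2).card = min a1 (∑ v, S2 v)) :=
  ⟨fun S1 S2 => part_one S1 S2, fun S1 => part_two S1,
   fun S1 S2 => part_three S1 S2, fun S2 => part_four S2⟩

end Dyck
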